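/- arXiv:1612.01295 — 3 statements merged into one kernel-verified Lean document; each statement's English description precedes it below -/
import Mathlib

section
/- For any finite graph G and any 2-lift H of G, the number of matchings of size k in H is at most the number of matchings of size k in G × K₂, i.e., m_k(H) ≤ m_k(G × K₂). -/
open scoped Classical

/-- A 2-lift of `G` determined by a symmetric sign function `s` on pairs of vertices:
`s u v = false` means the edge `(u,v)` lifts to the parallel pair, `true` to the crossing pair. -/
def twoLift {V : Type} (G : SimpleGraph V) (s : V → V → Bool)
    (hs : ∀ u v, s u v = s v u) : SimpleGraph (V × Bool) where
  Adj a b := G.Adj a.1 b.1 ∧ xor a.2 b.2 = s a.1 b.1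
  symm := by
    constructor
    rintro a b ⟨h1, h2⟩
    exact ⟨h1.symm, by rw [hs b.1 a.1, ← h2]; exact Bool.xor_comm _ _⟩
  loopless := by constructor; rintro a ⟨h1, _⟩; exact G.loopless.irrefl a.1 h1

/-- The bipartite double cover `G × K₂`: the 2-lift in which every edge is crossing. -/
def doubleCover {V : Type} (G : SimpleGraph V) : SimpleGraph (V × Bool) :=
  twoLift G (fun _ _ => true) (fun _ _ => rfl)

/-- The number of matchings of size `k` in `H`: sets of `k` pairwise disjoint edges. -/
noncomputable def matchingCount {W : Type} [Fintype W] (H : SimpleGraph W) (k : ℕ) : ℕ :=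
  Nat.card {M : Finset (Sym2 W) // M.card = k ∧ (↑M : Set (Sym2 W)) ⊆ H.edgeSet ∧
    (↑M : Set (Sym2 W)).Pairwise fun e f => ∀ v : W, v ∈ e → v ∉ f}

namespace TwoLiftAux

variable {V : Type}

/-- Flip the second (copy) coordinate. -/
def flip2 (x : V × Bool) : V × Bool := (x.1, !x.2)

lemma flip2_flip2 (x : V × Bool) : flip2 (flip2 x) = x := by cases x; simp [flip2]

lemma flip2_ne (x : V × Bool) : flip2 x ≠ x := by rcases x with ⟨a, b⟩; simp [flip2]

variable (M : Finset (Sym2 (V × Bool)))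

/-- The step relation: `y` is the flip of the partner of `x` in the matching `M`. -/
def Dr (x y : V × Bool) : Prop := s(x, flip2 y) ∈ M

/-- Orbit equivalence for the partial injection `Dr`: having a common descendant. -/
def Eqr (x y : V × Bool) : Prop :=
  ∃ z, Relation.ReflTransGen (Dr M) x z ∧ Relation.ReflTransGen (Dr M) y z

variable {M}

lemma partner_unique
    (hpair : (↑M : Set (Sym2 (V × Bool))).Pairwise fun e f => ∀ v, v ∈ e → v ∉ f)
    {x p q : V × Bool} (hp : s(x, p) ∈ M) (hq : s(x, q) ∈ M) : p = q := by
  by_cases h : (s(x, p) : Sym2 (V × Bool)) = s(x, q)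
  · rw [Sym2.eq_iff] at h
    rcases h with ⟨-, h⟩ | ⟨h1, h2⟩
    · exact h
    · rw [h2, h1]
  · exact absurd (Sym2.mem_mk_left x q)
      (hpair (Finset.mem_coe.mpr hp) (Finset.mem_coe.mpr hq) h x (Sym2.mem_mk_left x p))

lemma Dr_func
    (hpair : (↑M : Set (Sym2 (V × Bool))).Pairwise fun e f => ∀ v, v ∈ e → v ∉ f)
    {x y y' : V × Bool} (h1 : Dr M x y) (h2 : Dr M x y') : y = y' := by
  have := congrArg flip2 (partner_unique hpair h1 h2)
  rwa [flip2_flip2, flip2_flip2] at this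

lemma Dr_conj {x y : V × Bool} (h : Dr M x y) : Dr M (flip2 y) (flip2 x) := by
  unfold Dr at h ⊢
  rw [flip2_flip2, Sym2.eq_swap]
  exact h

/-- Confluence-type lemma for a partial function. -/
lemma confl
    (hpair : (↑M : Set (Sym2 (V × Bool))).Pairwise fun e f => ∀ v, v ∈ e → v ∉ f)
    {a b c : V × Bool} (h1 : Relation.ReflTransGen (Dr M) a b) :
    Relation.ReflTransGen (Dr M) a c →
      Relation.ReflTransGen (Dr M) b c ∨ Relation.ReflTransGen (Dr M) c b := by
  induction h1 using Relation.ReflTransGen.head_induction_on with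
  | refl => exact fun h2 => Or.inl h2
  | head hxy hyb ih =>
    intro h2
    rcases Relation.ReflTransGen.cases_head h2 with rfl | ⟨d, hxd, hdc⟩
    · exact Or.inr (Relation.ReflTransGen.head hxy hyb)
    · cases Dr_func hpair hxy hxd
      exact ih hdc

lemma rtg_flip {x z : V × Bool} (h : Relation.ReflTransGen (Dr M) x z) :
    Relation.ReflTransGen (Dr M) (flip2 z) (flip2 x) := by
  induction h with
  | refl => exact Relation.ReflTransGen.refl
  | tail _ hbc ih => exact Relation.ReflTransGen.head (Dr_conj hbc) ih

lemma rtg_chain {x z : V × Bool} (h : Relation.ReflTransGen (Dr M) x z) :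
    ∃ (k : ℕ) (w : ℕ → V × Bool), w 0 = x ∧ w k = z ∧ ∀ i < k, Dr M (w i) (w (i + 1)) := by
  induction h with
  | refl => exact ⟨0, fun _ => x, rfl, rfl, fun i hi => absurd hi (by omega)⟩
  | @tail b c _ hbc ih =>
    obtain ⟨k, w, h0, hk, hstep⟩ := ih
    refine ⟨k + 1, fun i => if i ≤ k then w i else c, by simpa using h0, by simp, ?_⟩
    intro i hi
    rcases Nat.lt_or_ge i k with h | h
    · simpa [Nat.le_of_lt h, Nat.succ_le_of_lt h] using hstep i h
    · have : i = k := by omega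
      subst this
      simp only [le_refl, if_pos, if_neg (by omega : ¬ i + 1 ≤ i)]
      rwa [hk]

/-- No `Dr`-chain connects a point to its flip. -/
lemma noflip (hloop : ∀ z : V × Bool, s(z, z) ∉ M)
    (hpair : (↑M : Set (Sym2 (V × Bool))).Pairwise fun e f => ∀ v, v ∈ e → v ∉ f) :
    ∀ k, ∀ w : ℕ → V × Bool, (∀ i < k, Dr M (w i) (w (i + 1))) → w k ≠ flip2 (w 0) := by
  intro k
  induction k using Nat.strong_induction_on with
  | _ k ih =>
    match k with
    | 0 => exact fun w _ hk => flip2_ne (w 0) hk.symm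
    | 1 =>
      intro w hw hk
      have h := hw 0 (by omega)
      unfold Dr at h
      rw [hk, flip2_flip2] at h
      exact hloop _ h
    | (m + 2) =>
      intro w hw hk
      have h0 : s(w 0, flip2 (w 1)) ∈ M := hw 0 (by omega)
      have h1 : s(w (m + 1), w 0) ∈ M := by
        have h := hw (m + 1) (by omega)
        unfold Dr at h
        rwa [hk, flip2_flip2] at h
      have heq : (s(w 0, flip2 (w 1)) : Sym2 (V × Bool)) = s(w (m + 1), w 0) := by
        by_contra hne
        exact hpair (Finset.mem_coe.mpr h0) (Finset.mem_coe.mpr h1) hne (w 0)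
          (Sym2.mem_mk_left _ _) (Sym2.mem_mk_right _ _)
      rw [Sym2.eq_iff] at heq
      rcases heq with ⟨-, hB⟩ | ⟨-, hB⟩
      · rw [hB] at h0
        exact hloop _ h0
      · exact ih m (by omega) (fun i => w (i + 1))
          (fun i hi => hw (i + 1) (by omega)) hB.symm

lemma eqr_refl (x : V × Bool) : Eqr M x x := ⟨x, .refl, .refl⟩

lemma eqr_symm {x y : V × Bool} (h : Eqr M x y) : Eqr M y x :=
  ⟨h.choose, h.choose_spec.2, h.choose_spec.1⟩

lemma eqr_single {x y : V × Bool} (h : Dr M x y) : Eqr M x y := ⟨y, .single h, .refl⟩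

lemma eqr_trans
    (hpair : (↑M : Set (Sym2 (V × Bool))).Pairwise fun e f => ∀ v, v ∈ e → v ∉ f)
    {x y z : V × Bool} (h1 : Eqr M x y) (h2 : Eqr M y z) : Eqr M x z := by
  obtain ⟨w1, hx1, hy1⟩ := h1
  obtain ⟨w2, hy2, hz2⟩ := h2
  rcases confl hpair hy1 hy2 with h | h
  · exact ⟨w2, hx1.trans h, hz2⟩
  · exact ⟨w1, hx1, hz2.trans h⟩

lemma eqr_flip
    (hpair : (↑M : Set (Sym2 (V × Bool))).Pairwise fun e f => ∀ v, v ∈ e → v ∉ f)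
    {x y : V × Bool} (h : Eqr M x y) : Eqr M (flip2 x) (flip2 y) := by
  obtain ⟨z, h1, h2⟩ := h
  rcases confl hpair (rtg_flip h1) (rtg_flip h2) with h | h
  · exact ⟨flip2 y, h, .refl⟩
  · exact ⟨flip2 x, .refl, h⟩

lemma eqr_not_flip (hloop : ∀ z : V × Bool, s(z, z) ∉ M)
    (hpair : (↑M : Set (Sym2 (V × Bool))).Pairwise fun e f => ∀ v, v ∈ e → v ∉ f)
    {x : V × Bool} : ¬ Eqr M x (flip2 x) := by
  rintro ⟨z, h1, h2⟩
  have h3 : Relation.ReflTransGen (Dr M) (flip2 z) x := by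
    have := rtg_flip h2
    rwa [flip2_flip2] at this
  obtain ⟨k, w, h0, hk, hstep⟩ := rtg_chain (h3.trans h1)
  exact noflip hloop hpair k w hstep (by rw [hk, h0, flip2_flip2])

/-- Existence of a consistent switching function for a matching in a 2-lift. -/
lemma exists_good_t (hloop : ∀ z : V × Bool, s(z, z) ∉ M)
    (hpair : (↑M : Set (Sym2 (V × Bool))).Pairwise fun e f => ∀ v, v ∈ e → v ∉ f) :
    ∃ t : V → Bool, ∀ (u v : V) (a b : Bool),
      s((u, a), (v, b)) ∈ M → xor (t u) (t v) = !(xor a b) := by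
  classical
  set sd : Setoid (V × Bool) :=
    ⟨fun x y => Eqr M x y ∨ Eqr M x (flip2 y), by
      refine ⟨fun x => Or.inl (eqr_refl x), ?_, ?_⟩
      · rintro x y (h | h)
        · exact Or.inl (eqr_symm h)
        · right
          have := eqr_flip hpair (eqr_symm h)
          rwa [flip2_flip2] at this
      · rintro x y z (h1 | h1) (h2 | h2)
        · exact Or.inl (eqr_trans hpair h1 h2)
        · exact Or.inr (eqr_trans hpair h1 h2)
        · exact Or.inr (eqr_trans hpair h1 (eqr_flip hpair h2))
        · left
          refine eqr_trans hpair h1 ?_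
          have := eqr_flip hpair h2
          rwa [flip2_flip2] at this⟩ with hsd
  let rep : V × Bool → V × Bool := fun x => (Quotient.mk sd x).out
  have hrep : ∀ x, Eqr M (rep x) x ∨ Eqr M (rep x) (flip2 x) := fun x => @Quotient.mk_out _ sd x
  have hrep_congr : ∀ x y, (Eqr M x y ∨ Eqr M x (flip2 y)) → rep x = rep y := by
    intro x y h
    have : Quotient.mk sd x = Quotient.mk sd y := Quotient.sound h
    simp only [rep, this]
  let pick : V × Bool → Bool := fun x => if Eqr M x (rep x) then true else false
  have pick_iff : ∀ x, pick x = true ↔ Eqr M x (rep x) := by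
    intro x
    by_cases h : Eqr M x (rep x) <;> simp [pick, h]
  have pick_flip : ∀ x, pick (flip2 x) = ! pick x := by
    intro x
    have hr : rep (flip2 x) = rep x :=
      hrep_congr _ _ (Or.inr (eqr_refl (flip2 x)))
    by_cases h : Eqr M x (rep x)
    · have h1 : ¬ Eqr M (flip2 x) (rep (flip2 x)) := by
        rw [hr]
        intro hc
        exact eqr_not_flip hloop hpair (eqr_trans hpair h (eqr_symm hc))
      simp [pick, h, h1]
    · have h1 : Eqr M (flip2 x) (rep (flip2 x)) := by
        rw [hr]
        rcases hrep x with hc | hc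
        · exact absurd (eqr_symm hc) h
        · exact eqr_symm hc
      simp [pick, h, h1]
  have pick_congr : ∀ x y, Eqr M x y → pick x = pick y := by
    intro x y h
    have hr : rep x = rep y := hrep_congr _ _ (Or.inl h)
    by_cases hx : Eqr M x (rep x)
    · have hy : Eqr M y (rep y) := by
        rw [← hr]; exact eqr_trans hpair (eqr_symm h) hx
      simp [pick, hx, hy]
    · have hy : ¬ Eqr M y (rep y) := fun hc => hx (by rw [hr]; exact eqr_trans hpair h hc)
      simp [pick, hx, hy]
  let t : V → Bool := fun v => pick (v, true)
  have pick_t : ∀ v : V, pick (v, t v) = true := by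
    intro v
    cases h : pick (v, true) with
    | true => simp [t, h]
    | false =>
      have : (v, false) = flip2 (v, true) := rfl
      simp only [t, h]
      rw [this, pick_flip, h]
      rfl
  have pick_det : ∀ (v : V) (c : Bool), pick (v, c) = true → t v = c := by
    intro v c hc
    by_contra hne
    have hne' : t v = !c := by
      cases htv : t v <;> cases c <;> simp_all
    have h2 := pick_t v
    rw [hne'] at h2
    have hfe : ((v, !c) : V × Bool) = flip2 (v, c) := rfl
    rw [hfe, pick_flip, hc] at h2
    simp at h2
  refine ⟨t, ?_⟩
  intro u v a b hm
  have hD : Dr M (u, a) (v, !b) := by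
    unfold Dr
    have : flip2 ((v, !b) : V × Bool) = (v, b) := by simp [flip2]
    rw [this]
    exact hm
  have hE : Eqr M (u, a) (v, !b) := eqr_single hD
  by_cases hp : pick (u, a) = true
  · have h2 : pick (v, !b) = true := by rw [← pick_congr _ _ hE]; exact hp
    rw [pick_det u a hp, pick_det v (!b) h2]
    cases a <;> cases b <;> rfl
  · have hfa : pick (u, a) = false := by
      cases h : pick (u, a)
      · rfl
      · exact absurd h hp
    have hp' : pick (u, !a) = true := by
      have : ((u, !a) : V × Bool) = flip2 (u, a) := rfl
      rw [this, pick_flip, hfa]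
      rfl
    have h2 : pick (v, !b) = false := by rw [← pick_congr _ _ hE]; exact hfa
    have h3 : pick (v, b) = true := by
      have : ((v, b) : V × Bool) = flip2 (v, !b) := by simp [flip2]
      rw [this, pick_flip, h2]
      rfl
    rw [pick_det u (!a) hp', pick_det v b h3]
    cases a <;> cases b <;> rfl

/-- Goodness of a switching function w.r.t. a set of base edges. -/
def GoodProj (s : V → V → Bool) (F : Finset (Sym2 V)) (t : V → Bool) : Prop :=
  ∀ u v : V, s(u, v) ∈ F → xor (t u) (t v) = !(s u v)

noncomputable def tFor (s : V → V → Bool) (F : Finset (Sym2 V)) : V → Bool :=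
  if h : ∃ t, GoodProj s F t then h.choose else fun _ => false

lemma tFor_spec {s : V → V → Bool} {F : Finset (Sym2 V)} (h : ∃ t, GoodProj s F t) :
    GoodProj s F (tFor s F) := by
  unfold tFor
  rw [dif_pos h]
  exact h.choose_spec

lemma exists_goodproj {G : SimpleGraph V} {s : V → V → Bool} {hs : ∀ u v, s u v = s v u}
    {M : Finset (Sym2 (V × Bool))}
    (hsub : (↑M : Set (Sym2 (V × Bool))) ⊆ (twoLift G s hs).edgeSet)
    (hpair : (↑M : Set (Sym2 (V × Bool))).Pairwise fun e f => ∀ v, v ∈ e → v ∉ f) :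
    ∃ t, GoodProj s (M.image (Sym2.map Prod.fst)) t := by
  have hloop : ∀ z : V × Bool, s(z, z) ∉ M := by
    intro z hz
    have := hsub (Finset.mem_coe.mpr hz)
    rw [SimpleGraph.mem_edgeSet] at this
    exact (twoLift G s hs).loopless.irrefl z this
  obtain ⟨t, ht⟩ := exists_good_t hloop hpair
  refine ⟨t, ?_⟩
  intro u v huv
  obtain ⟨e, he, hmap⟩ := Finset.mem_image.mp huv
  revert he hmap
  induction e using Sym2.ind with
  | _ x y =>
    intro he hmap
    rcases x with ⟨x1, x2⟩
    rcases y with ⟨y1, y2⟩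
    rw [Sym2.map_pair_eq, Sym2.eq_iff] at hmap
    have hadj := hsub (Finset.mem_coe.mpr he)
    rw [SimpleGraph.mem_edgeSet] at hadj
    have hx : xor x2 y2 = s x1 y1 := hadj.2
    rcases hmap with ⟨h1, h2⟩ | ⟨h1, h2⟩
    · subst h1; subst h2
      have := ht x1 y1 x2 y2 he
      rwa [hx] at this
    · subst h1; subst h2
      have := ht x1 y1 x2 y2 he
      rw [hx, hs x1 y1] at this
      rwa [Bool.xor_comm] at this

/-- The copy-switching vertex map. -/
def phi (t : V → Bool) (x : V × Bool) : V × Bool := (x.1, xor x.2 (t x.1))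

lemma phi_invol (t : V → Bool) (x : V × Bool) : phi t (phi t x) = x := by
  rcases x with ⟨v, c⟩
  cases c <;> cases h : t v <;> simp [phi, h]

lemma F_invol (t : V → Bool) (e : Sym2 (V × Bool)) :
    Sym2.map (phi t) (Sym2.map (phi t) e) = e := by
  rw [Sym2.map_map]
  have : phi t ∘ phi t = id := funext (phi_invol t)
  rw [this, Sym2.map_id]
  rfl

lemma F_inj (t : V → Bool) : Function.Injective (Sym2.map (phi t)) := by
  intro e f h
  have := congrArg (Sym2.map (phi t)) h
  rwa [F_invol, F_invol] at this

lemma proj_image (t : V → Bool) (M : Finset (Sym2 (V × Bool))) :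
    (M.image (Sym2.map (phi t))).image (Sym2.map Prod.fst) = M.image (Sym2.map Prod.fst) := by
  rw [Finset.image_image]
  congr 1
  funext e
  show Sym2.map Prod.fst (Sym2.map (phi t) e) = _
  rw [Sym2.map_map]
  congr 1

lemma image_image_invol (t : V → Bool) (M : Finset (Sym2 (V × Bool))) :
    (M.image (Sym2.map (phi t))).image (Sym2.map (phi t)) = M := by
  rw [Finset.image_image]
  have : Sym2.map (phi t) ∘ Sym2.map (phi t) = id := by
    funext e
    exact F_invol t e
  rw [this, Finset.image_id]

/-- The global injection on matchings. -/
noncomputable def Phi (s : V → V → Bool) (M : Finset (Sym2 (V × Bool))) :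
    Finset (Sym2 (V × Bool)) :=
  M.image (Sym2.map (phi (tFor s (M.image (Sym2.map Prod.fst)))))

lemma Phi_proj (s : V → V → Bool) (M : Finset (Sym2 (V × Bool))) :
    (Phi s M).image (Sym2.map Prod.fst) = M.image (Sym2.map Prod.fst) :=
  proj_image _ M

lemma Phi_injective (s : V → V → Bool) :
    Function.Injective (Phi (V := V) s) := by
  intro M1 M2 h
  have hproj : M1.image (Sym2.map Prod.fst) = M2.image (Sym2.map Prod.fst) := by
    rw [← Phi_proj s M1, ← Phi_proj s M2, h]
  have h2 : M1.image (Sym2.map (phi (tFor s (M2.image (Sym2.map Prod.fst)))))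
      = M2.image (Sym2.map (phi (tFor s (M2.image (Sym2.map Prod.fst))))) := by
    have := h
    unfold Phi at this
    rwa [hproj] at this
  calc M1 = (M1.image (Sym2.map (phi (tFor s (M2.image (Sym2.map Prod.fst)))))).image
          (Sym2.map (phi (tFor s (M2.image (Sym2.map Prod.fst))))) :=
        (image_image_invol _ _).symm
    _ = (M2.image (Sym2.map (phi (tFor s (M2.image (Sym2.map Prod.fst)))))).image
          (Sym2.map (phi (tFor s (M2.image (Sym2.map Prod.fst))))) := by rw [h2]
    _ = M2 := image_image_invol _ _

end TwoLiftAux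

theorem matchings_of_two_lift_le {V : Type} [Fintype V] (G : SimpleGraph V)
    (s : V → V → Bool) (hs : ∀ u v, s u v = s v u) (k : ℕ) :
    matchingCount (twoLift G s hs) k ≤ matchingCount (doubleCover G) k := by
  classical
  have key : ∀ M : Finset (Sym2 (V × Bool)),
      (M.card = k ∧ (↑M : Set (Sym2 (V × Bool))) ⊆ (twoLift G s hs).edgeSet ∧
        (↑M : Set (Sym2 (V × Bool))).Pairwise fun e f => ∀ v, v ∈ e → v ∉ f) →
      ((TwoLiftAux.Phi s M).card = k ∧
        (↑(TwoLiftAux.Phi s M) : Set (Sym2 (V × Bool))) ⊆ (doubleCover G).edgeSet ∧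
        (↑(TwoLiftAux.Phi s M) : Set (Sym2 (V × Bool))).Pairwise
          fun e f => ∀ v, v ∈ e → v ∉ f) := by
    rintro M ⟨hcard, hsub, hpair⟩
    have hgp : TwoLiftAux.GoodProj s (M.image (Sym2.map Prod.fst))
        (TwoLiftAux.tFor s (M.image (Sym2.map Prod.fst))) :=
      TwoLiftAux.tFor_spec (TwoLiftAux.exists_goodproj hsub hpair)
    set t := TwoLiftAux.tFor s (M.image (Sym2.map Prod.fst)) with hT
    refine ⟨?_, ?_, ?_⟩
    · rw [show TwoLiftAux.Phi s M = M.image (Sym2.map (TwoLiftAux.phi t)) from rfl,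
        Finset.card_image_of_injective _ (TwoLiftAux.F_inj t)]
      exact hcard
    · intro e' he'
      rw [Finset.mem_coe] at he'
      obtain ⟨e, he, rfl⟩ := Finset.mem_image.mp he'
      revert he
      induction e using Sym2.ind with
      | _ x y =>
        intro he
        rw [Sym2.map_pair_eq, SimpleGraph.mem_edgeSet]
        have hadj := hsub (Finset.mem_coe.mpr he)
        rw [SimpleGraph.mem_edgeSet] at hadj
        obtain ⟨hG, hx⟩ := hadj
        have hmem : (s(x.1, y.1) : Sym2 V) ∈ M.image (Sym2.map Prod.fst) :=
          Finset.mem_image.mpr ⟨s(x, y), he, Sym2.map_pair_eq _ _ _⟩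
        have ht2 := hgp x.1 y.1 hmem
        refine ⟨hG, ?_⟩
        show xor (xor x.2 (t x.1)) (xor y.2 (t y.1)) = true
        revert hx ht2
        generalize t x.1 = c
        generalize t y.1 = d
        generalize x.2 = a
        generalize y.2 = b
        generalize s x.1 y.1 = p
        revert a b c d p
        decide
    · intro e' he' f' hf' hne v hve hvf
      rw [Finset.mem_coe] at he' hf'
      obtain ⟨e, he, rfl⟩ := Finset.mem_image.mp he'
      obtain ⟨f, hf, rfl⟩ := Finset.mem_image.mp hf'
      have hef : e ≠ f := fun h => hne (by rw [h])
      have hp := hpair (Finset.mem_coe.mpr he) (Finset.mem_coe.mpr hf) hef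
      rw [Sym2.mem_map] at hve hvf
      obtain ⟨w, hw, hwv⟩ := hve
      obtain ⟨w', hw', hwv'⟩ := hvf
      have hww : w = w' := by
        have h1 := hwv.trans hwv'.symm
        have h2 := congrArg (TwoLiftAux.phi t) h1
        rwa [TwoLiftAux.phi_invol, TwoLiftAux.phi_invol] at h2
      exact hp w hw (hww ▸ hw')
  exact Nat.card_le_card_of_injective
    (fun Mp => ⟨TwoLiftAux.Phi s Mp.1, key Mp.1 Mp.2⟩)
    (fun M1 M2 h => Subtype.ext (TwoLiftAux.Phi_injective s (congrArg Subtype.val h)))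
end

section
/- Let A be a nonnegative symmetric q × q real matrix that is TN₂ (every 2 × 2 minor of A is nonpositive). Then for any finite graph G and any 2-lift H of G, we have Z(G × K₂, A) ≥ Z(H,A). In particular Z(G,A)² ≤ Z(G × K₂, A). -/
open scoped Classical

/-- The homomorphism partition function `Z(G,A) = Σ_φ Π_{(u,v)∈E(G)} A (φ u) (φ v)`.
(Each edge is an unordered pair; for symmetric `A` the choice of representative is immaterial.) -/
noncomputable def Z {V ι : Type} [Fintype V] [Fintype ι] (G : SimpleGraph V)
    (A : Matrix ι ι ℝ) : ℝ :=
  ∑ φ : V → ι, ∏ e ∈ G.edgeFinset,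
    A (φ (Quot.out e).1) (φ (Quot.out e).2)

/-! ### Auxiliary material for the proof -/

namespace TN2aux

open Finset

/-- A sign function `Bool → ℝ`. -/
noncomputable def sgn (b : Bool) : ℝ := cond b 1 (-1)

lemma sgn_cases (b : Bool) : sgn b = 1 ∨ sgn b = -1 := by cases b <;> simp [sgn]

lemma sgn_xor (a b : Bool) : sgn (xor a b) = -(sgn a * sgn b) := by
  cases a <;> cases b <;> simp [sgn]

/-- The sum of a ±1-valued multiplicative character over all `ε : ι → Bool` is nonnegative. -/
lemma charsum_nonneg {ι κ : Type} [Fintype ι] (S : Finset κ) (uu vv : κ → ι) :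
    0 ≤ ∑ ε : ι → Bool, ∏ e ∈ S, (sgn (ε (uu e)) * sgn (ε (vv e))) := by
  set F : (ι → Bool) → ℝ := fun ε => ∏ e ∈ S, (sgn (ε (uu e)) * sgn (ε (vv e))) with hF
  have hFpm : ∀ ε, F ε = 1 ∨ F ε = -1 := by
    intro ε
    refine Finset.prod_induction _ (fun x => x = 1 ∨ x = -1) ?_ (Or.inl rfl) ?_
    · rintro x y (rfl | rfl) (rfl | rfl) <;> norm_num
    · intro e _
      rcases sgn_cases (ε (uu e)) with h1 | h1 <;> rcases sgn_cases (ε (vv e)) with h2 | h2 <;>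
        rw [h1, h2] <;> norm_num
  by_cases hall : ∀ ε : ι → Bool, F ε = 1
  · have : ∑ ε : ι → Bool, F ε = (Fintype.card (ι → Bool) : ℝ) := by
      rw [Finset.sum_congr rfl (fun ε _ => hall ε)]; simp
    rw [this]; positivity
  · push_neg at hall
    obtain ⟨ε₀, hε₀⟩ := hall
    have hε₀' : F ε₀ = -1 := (hFpm ε₀).resolve_left hε₀
    have hmul : ∀ ε, F (fun i => xor (ε₀ i) (ε i)) = F ε₀ * F ε := by
      intro ε
      rw [hF]
      simp only
      rw [← Finset.prod_mul_distrib]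
      refine Finset.prod_congr rfl fun e _ => ?_
      rw [sgn_xor, sgn_xor]; ring
    have hinv : Function.Involutive (fun ε : ι → Bool => fun i => xor (ε₀ i) (ε i)) := by
      intro ε; funext i; cases ε₀ i <;> simp
    have key : ∑ ε : ι → Bool, F ε = -∑ ε : ι → Bool, F ε := by
      calc ∑ ε : ι → Bool, F ε
          = ∑ ε : ι → Bool, F (fun i => xor (ε₀ i) (ε i)) :=
            (Fintype.sum_equiv hinv.toPerm _ _ (fun ε => rfl)).symm
        _ = ∑ ε : ι → Bool, F ε₀ * F ε := by simp_rw [hmul]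
        _ = -∑ ε : ι → Bool, F ε := by rw [← Finset.mul_sum, hε₀']; ring
    linarith

/-- High-temperature expansion comparison: the ferromagnetic Ising partition sum dominates. -/
lemma ising_core {ι κ : Type} [Fintype ι] (Es : Finset κ) (uu vv : κ → ι)
    (a b c : κ → ℝ) (ha : ∀ e ∈ Es, 0 ≤ a e) (hcb : ∀ e ∈ Es, |c e| ≤ b e) :
    ∑ ε : ι → Bool, ∏ e ∈ Es, (c e * (sgn (ε (uu e)) * sgn (ε (vv e))) + a e)
      ≤ ∑ ε : ι → Bool, ∏ e ∈ Es, (b e * (sgn (ε (uu e)) * sgn (ε (vv e))) + a e) := by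
  have expand : ∀ d : κ → ℝ,
      ∑ ε : ι → Bool, ∏ e ∈ Es, (d e * (sgn (ε (uu e)) * sgn (ε (vv e))) + a e)
        = ∑ S ∈ Es.powerset, (∏ e ∈ S, d e) *
            (∑ ε : ι → Bool, ∏ e ∈ S, (sgn (ε (uu e)) * sgn (ε (vv e)))) *
            ∏ e ∈ Es \ S, a e := by
    intro d
    have h1 : ∀ ε : ι → Bool,
        ∏ e ∈ Es, (d e * (sgn (ε (uu e)) * sgn (ε (vv e))) + a e)
          = ∑ S ∈ Es.powerset,
              ((∏ e ∈ S, d e) * ∏ e ∈ S, (sgn (ε (uu e)) * sgn (ε (vv e)))) *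
              ∏ e ∈ Es \ S, a e := by
      intro ε
      rw [Finset.prod_add]
      refine Finset.sum_congr rfl fun S _ => ?_
      rw [Finset.prod_mul_distrib]
    rw [Finset.sum_congr rfl fun ε _ => h1 ε, Finset.sum_comm]
    refine Finset.sum_congr rfl fun S _ => ?_
    rw [← Finset.sum_mul, ← Finset.mul_sum]
  rw [expand c, expand b]
  refine Finset.sum_le_sum fun S hS => ?_
  rw [Finset.mem_powerset] at hS
  have hK := charsum_nonneg S uu vv
  have hA : 0 ≤ ∏ e ∈ Es \ S, a e :=
    Finset.prod_nonneg fun e he => ha e (Finset.mem_sdiff.mp he).1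
  have hcble : ∏ e ∈ S, c e ≤ ∏ e ∈ S, b e := by
    calc ∏ e ∈ S, c e ≤ |∏ e ∈ S, c e| := le_abs_self _
      _ = ∏ e ∈ S, |c e| := Finset.abs_prod _ _
      _ ≤ ∏ e ∈ S, b e :=
        Finset.prod_le_prod (fun e _ => abs_nonneg _) (fun e he => hcb e (hS he))
  exact mul_le_mul_of_nonneg_right (mul_le_mul_of_nonneg_right hcble hK) hA

lemma if_sgn (Pe Qe : ℝ) (c : Bool) :
    (if c = true then Qe else Pe) = ((Qe - Pe)/2) * sgn c + (Pe + Qe)/2 := by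
  cases c <;> simp [sgn] <;> ring

lemma sgn_xor3 (a b c : Bool) : sgn (xor a (xor b c)) = sgn a * (sgn b * sgn c) := by
  cases a <;> cases b <;> cases c <;> simp [sgn]

/-- The Ising-type inequality: for `0 ≤ P ≤ Q` edge weights, the all-crossing (ferromagnetic)
choice of signs maximizes the partition sum over `ε : ι → Bool`. -/
lemma ising {ι κ : Type} [Fintype ι] (Es : Finset κ) (uu vv : κ → ι) (P Q : κ → ℝ)
    (hP : ∀ e ∈ Es, 0 ≤ P e) (hPQ : ∀ e ∈ Es, P e ≤ Q e) (t : κ → Bool) :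
    ∑ ε : ι → Bool, ∏ e ∈ Es,
        (if xor (t e) (xor (ε (uu e)) (ε (vv e))) = true then Q e else P e)
      ≤ ∑ ε : ι → Bool, ∏ e ∈ Es,
        (if xor true (xor (ε (uu e)) (ε (vv e))) = true then Q e else P e) := by
  have rew : ∀ (r : κ → Bool) (ε : ι → Bool) (e : κ),
      (if xor (r e) (xor (ε (uu e)) (ε (vv e))) = true then Q e else P e)
        = ((Q e - P e)/2 * sgn (r e)) * (sgn (ε (uu e)) * sgn (ε (vv e))) + (P e + Q e)/2 := by
    intro r ε e
    rw [if_sgn, sgn_xor3]; ring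
  calc ∑ ε : ι → Bool, ∏ e ∈ Es,
        (if xor (t e) (xor (ε (uu e)) (ε (vv e))) = true then Q e else P e)
      = ∑ ε : ι → Bool, ∏ e ∈ Es,
          (((Q e - P e)/2 * sgn (t e)) * (sgn (ε (uu e)) * sgn (ε (vv e))) + (P e + Q e)/2) := by
        exact Finset.sum_congr rfl fun ε _ => Finset.prod_congr rfl fun e _ => rew t ε e
    _ ≤ ∑ ε : ι → Bool, ∏ e ∈ Es,
          (((Q e - P e)/2 * sgn true) * (sgn (ε (uu e)) * sgn (ε (vv e))) + (P e + Q e)/2) := by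
        refine ising_core Es uu vv _ _ _ (fun e he => ?_) (fun e he => ?_)
        · have := hP e he; have := hPQ e he; linarith
        · have h1 := hPQ e he
          have h2 : |(Q e - P e)/2 * sgn (t e)| = (Q e - P e)/2 * |sgn (t e)| := by
            rw [abs_mul, abs_of_nonneg (by linarith : (0:ℝ) ≤ (Q e - P e)/2)]
          rw [h2]
          have h3 : |sgn (t e)| = 1 := by cases t e <;> simp [sgn]
          rw [h3]
          simp [sgn]
    _ = ∑ ε : ι → Bool, ∏ e ∈ Es,
        (if xor true (xor (ε (uu e)) (ε (vv e))) = true then Q e else P e) := by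
        exact (Finset.sum_congr rfl fun ε _ => Finset.prod_congr rfl fun e _ =>
          rew (fun _ => true) ε e).symm

/-- Gauge invariance of the ε-sum: twisting the signs by a "gauge" `η` does not change the sum. -/
lemma gauge' {ι κ : Type} [Fintype ι] (Es : Finset κ) (uu vv : κ → ι) (P Q : κ → ℝ)
    (t : κ → Bool) (η : ι → Bool) :
    ∑ ε : ι → Bool, ∏ e ∈ Es,
        (if xor (xor (t e) (xor (η (uu e)) (η (vv e)))) (xor (ε (uu e)) (ε (vv e))) = true
          then Q e else P e)
      = ∑ ε : ι → Bool, ∏ e ∈ Es,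
        (if xor (t e) (xor (ε (uu e)) (ε (vv e))) = true then Q e else P e) := by
  have hinv : Function.Involutive (fun ε : ι → Bool => fun i => xor (η i) (ε i)) := by
    intro ε; funext i; cases η i <;> simp
  refine Fintype.sum_equiv hinv.toPerm _ _ fun ε => ?_
  refine Finset.prod_congr rfl fun e _ => ?_
  have hb : ∀ a b c d e : Bool,
      xor (xor a (xor b c)) (xor d e) = xor a (xor (xor b d) (xor c e)) := by decide
  simp only [Function.Involutive.coe_toPerm]
  rw [hb]; rfl

/-- Evaluating a symmetric function on the canonical representative of `s(a,b)`. -/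
lemma out_pair {α : Type} (w : α → α → ℝ) (hw : ∀ a b, w a b = w b a) {e : Sym2 α}
    {a b : α} (h : e = s(a, b)) :
    w (Quot.out e).1 (Quot.out e).2 = w a b := by
  have h2 : s((Quot.out e).1, (Quot.out e).2) = s(a, b) :=
    (Quot.out_eq e).trans h
  rw [Sym2.eq_iff] at h2
  rcases h2 with ⟨h3, h4⟩ | ⟨h3, h4⟩
  · rw [h3, h4]
  · rw [h3, h4, hw]

/-- The pair weight of an edge: parallel (`t = false`) or crossing (`t = true`). -/
noncomputable def pw {q : ℕ} (A : Matrix (Fin q) (Fin q) ℝ) (t : Bool) (a b c d : Fin q) : ℝ :=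
  if t then A a d * A b c else A a c * A b d

/-- The edge weight of a pair `(x, y)` of colourings on an edge `e`, with sign pattern `t`. -/
noncomputable def Wf {q : ℕ} (A : Matrix (Fin q) (Fin q) ℝ) {V : Type}
    (t : V → V → Bool) (x y : V → Fin q) (e : Sym2 V) : ℝ :=
  pw A (t (Quot.out e).1 (Quot.out e).2)
    (x (Quot.out e).1) (y (Quot.out e).1) (x (Quot.out e).2) (y (Quot.out e).2)

/-- The partition function of the 2-lift with sign pattern `t`, written in the "pair world". -/
noncomputable def Spair {q : ℕ} (A : Matrix (Fin q) (Fin q) ℝ) {V : Type} [Fintype V]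
    (G : SimpleGraph V) (t : V → V → Bool) : ℝ :=
  ∑ p : (V → Fin q) × (V → Fin q), ∏ e ∈ G.edgeFinset, Wf A t p.1 p.2 e

lemma pw_true {q : ℕ} (A : Matrix (Fin q) (Fin q) ℝ) (a b c d : Fin q) :
    pw A true a b c d = A a d * A b c := rfl

lemma pw_false {q : ℕ} (A : Matrix (Fin q) (Fin q) ℝ) (a b c d : Fin q) :
    pw A false a b c d = A a c * A b d := by
  rw [pw]; simp

lemma pw_nonneg {q : ℕ} (A : Matrix (Fin q) (Fin q) ℝ) (hnn : ∀ i j, 0 ≤ A i j)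
    (t : Bool) (a b c d : Fin q) : 0 ≤ pw A t a b c d := by
  rw [pw]; split <;> exact mul_nonneg (hnn _ _) (hnn _ _)

/-- The key TN₂ inequality: sorting each pair makes the parallel weight at most the crossing. -/
lemma key {q : ℕ} (A : Matrix (Fin q) (Fin q) ℝ) (hnn : ∀ i j, 0 ≤ A i j)
    (hTN : ∀ i j r s : Fin q, i < j → r < s → A i r * A j s - A i s * A j r ≤ 0)
    (a b c d : Fin q) :
    pw A (xor (decide (b < a)) (decide (d < c))) a b c d
      ≤ pw A (!(xor (decide (b < a)) (decide (d < c)))) a b c d := by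
  cases hba : decide (b < a) <;> cases hdc : decide (d < c) <;>
    simp only [Bool.xor_false, Bool.xor_true, Bool.false_xor, Bool.true_xor, Bool.not_false,
      Bool.not_true, Bool.not_not, pw_true, pw_false] <;>
    simp only [decide_eq_false_iff_not, decide_eq_true_eq, not_lt] at hba hdc
  · rcases eq_or_lt_of_le hba with rfl | hba'
    · rw [mul_comm]
    · rcases eq_or_lt_of_le hdc with rfl | hdc'
      · rw [mul_comm]
      · have := hTN a b c d hba' hdc'; linarith
  · rcases eq_or_lt_of_le hba with rfl | hba'
    · rw [mul_comm]
    · have := hTN a b d c hba' hdc; linarith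
  · rcases eq_or_lt_of_le hdc with rfl | hdc'
    · rw [mul_comm]
    · have := hTN b a c d hba hdc'; linarith
  · have := hTN b a d c hba hdc; linarith

/-- Per-edge bridging: `Wf` with twisted sign pattern equals the `P/Q` if-form. -/
lemma bridge {q : ℕ} (A : Matrix (Fin q) (Fin q) ℝ) {V : Type}
    (r : V → V → Bool) (ε η : V → Bool) (x y : V → Fin q) (e : Sym2 V) :
    Wf A (fun u v => xor (r u v) (xor (ε u) (ε v))) x y e
      = (if xor (xor (r (Quot.out e).1 (Quot.out e).2)
              (xor (η (Quot.out e).1) (η (Quot.out e).2)))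
            (xor (ε (Quot.out e).1) (ε (Quot.out e).2)) = true
          then pw A (!(xor (η (Quot.out e).1) (η (Quot.out e).2)))
            (x (Quot.out e).1) (y (Quot.out e).1) (x (Quot.out e).2) (y (Quot.out e).2)
          else pw A (xor (η (Quot.out e).1) (η (Quot.out e).2))
            (x (Quot.out e).1) (y (Quot.out e).1) (x (Quot.out e).2) (y (Quot.out e).2)) := by
  rw [Wf]
  cases hr : r (Quot.out e).1 (Quot.out e).2 <;>
    cases hη : xor (η (Quot.out e).1) (η (Quot.out e).2) <;>
      cases hε : xor (ε (Quot.out e).1) (ε (Quot.out e).2) <;>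
        simp [hr, hη, hε]

/-- Swapping the two colourings at the vertices flagged by `ε` twists the sign pattern. -/
lemma swapW {q : ℕ} (A : Matrix (Fin q) (Fin q) ℝ) {V : Type}
    (t : V → V → Bool) (ε : V → Bool) (x y : V → Fin q) (e : Sym2 V) :
    Wf A t (fun v => cond (ε v) (y v) (x v)) (fun v => cond (ε v) (x v) (y v)) e
      = Wf A (fun u v => xor (t u v) (xor (ε u) (ε v))) x y e := by
  rw [Wf, Wf]
  cases hεu : ε (Quot.out e).1 <;> cases hεv : ε (Quot.out e).2 <;>
    cases ht : t (Quot.out e).1 (Quot.out e).2 <;>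
      simp [pw, hεu, hεv, ht, mul_comm]

lemma swap_reindex {q : ℕ} (A : Matrix (Fin q) (Fin q) ℝ) {V : Type} [Fintype V]
    (G : SimpleGraph V) (t : V → V → Bool) (ε : V → Bool) :
    Spair A G (fun u v => xor (t u v) (xor (ε u) (ε v))) = Spair A G t := by
  rw [Spair, Spair]
  have hinv : Function.Involutive
      (fun p : (V → Fin q) × (V → Fin q) =>
        ((fun v => cond (ε v) (p.2 v) (p.1 v)), (fun v => cond (ε v) (p.1 v) (p.2 v)))) := by
    intro p
    refine Prod.ext ?_ ?_ <;> funext v <;> cases hεv : ε v <;> simp [hεv]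
  refine Fintype.sum_equiv hinv.toPerm _ _ fun p => ?_
  simp only [Function.Involutive.coe_toPerm]
  exact Finset.prod_congr rfl fun e _ => (swapW A t ε p.1 p.2 e).symm

/-- The per-pair inequality, obtained from the Ising inequality after sorting each pair. -/
lemma eps_le {q : ℕ} (A : Matrix (Fin q) (Fin q) ℝ) {V : Type} [Fintype V]
    (G : SimpleGraph V) (hnn : ∀ i j, 0 ≤ A i j)
    (hTN : ∀ i j r s : Fin q, i < j → r < s → A i r * A j s - A i s * A j r ≤ 0)
    (t : V → V → Bool) (x y : V → Fin q) :
    ∑ ε : V → Bool, ∏ e ∈ G.edgeFinset,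
        Wf A (fun u v => xor (t u v) (xor (ε u) (ε v))) x y e
      ≤ ∑ ε : V → Bool, ∏ e ∈ G.edgeFinset,
        Wf A (fun u v => xor true (xor (ε u) (ε v))) x y e := by
  classical
  set η : V → Bool := fun v => decide (y v < x v) with hη
  set uu : Sym2 V → V := fun e => (Quot.out e).1 with huu
  set vv : Sym2 V → V := fun e => (Quot.out e).2 with hvv
  set P : Sym2 V → ℝ := fun e =>
    pw A (xor (η (uu e)) (η (vv e))) (x (uu e)) (y (uu e)) (x (vv e)) (y (vv e)) with hP
  set Q : Sym2 V → ℝ := fun e =>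
    pw A (!(xor (η (uu e)) (η (vv e)))) (x (uu e)) (y (uu e)) (x (vv e)) (y (vv e)) with hQ
  have hPnn : ∀ e ∈ G.edgeFinset, 0 ≤ P e := fun e _ => pw_nonneg A hnn _ _ _ _ _
  have hPQ : ∀ e ∈ G.edgeFinset, P e ≤ Q e := fun e _ =>
    key A hnn hTN (x (uu e)) (y (uu e)) (x (vv e)) (y (vv e))
  calc ∑ ε : V → Bool, ∏ e ∈ G.edgeFinset,
        Wf A (fun u v => xor (t u v) (xor (ε u) (ε v))) x y e
      = ∑ ε : V → Bool, ∏ e ∈ G.edgeFinset,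
          (if xor (xor (t (uu e) (vv e)) (xor (η (uu e)) (η (vv e))))
              (xor (ε (uu e)) (ε (vv e))) = true then Q e else P e) :=
        Finset.sum_congr rfl fun ε _ => Finset.prod_congr rfl fun e _ => bridge A t ε η x y e
    _ ≤ ∑ ε : V → Bool, ∏ e ∈ G.edgeFinset,
          (if xor true (xor (ε (uu e)) (ε (vv e))) = true then Q e else P e) :=
        ising G.edgeFinset uu vv P Q hPnn hPQ
          (fun e => xor (t (uu e) (vv e)) (xor (η (uu e)) (η (vv e))))
    _ = ∑ ε : V → Bool, ∏ e ∈ G.edgeFinset,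
          (if xor (xor true (xor (η (uu e)) (η (vv e))))
              (xor (ε (uu e)) (ε (vv e))) = true then Q e else P e) :=
        (gauge' G.edgeFinset uu vv P Q (fun _ => true) η).symm
    _ = ∑ ε : V → Bool, ∏ e ∈ G.edgeFinset,
        Wf A (fun u v => xor true (xor (ε u) (ε v))) x y e :=
        Finset.sum_congr rfl fun ε _ => Finset.prod_congr rfl fun e _ =>
          (bridge A (fun _ _ => true) ε η x y e).symm

/-- The main "pair world" inequality: the all-crossing sign pattern maximizes `Spair`. -/
lemma pair_le {q : ℕ} (A : Matrix (Fin q) (Fin q) ℝ) {V : Type} [Fintype V]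
    (G : SimpleGraph V) (hnn : ∀ i j, 0 ≤ A i j)
    (hTN : ∀ i j r s : Fin q, i < j → r < s → A i r * A j s - A i s * A j r ≤ 0)
    (t : V → V → Bool) :
    Spair A G t ≤ Spair A G (fun _ _ => true) := by
  classical
  have hcard : (0:ℝ) < (Fintype.card (V → Bool) : ℝ) := by
    exact_mod_cast Fintype.card_pos
  have expand : ∀ r : V → V → Bool,
      (Fintype.card (V → Bool) : ℝ) * Spair A G r
        = ∑ p : (V → Fin q) × (V → Fin q), ∑ ε : V → Bool, ∏ e ∈ G.edgeFinset,
            Wf A (fun u v => xor (r u v) (xor (ε u) (ε v))) p.1 p.2 e := by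
    intro r
    calc (Fintype.card (V → Bool) : ℝ) * Spair A G r
        = ∑ _ε : V → Bool, Spair A G r := by
          rw [Finset.sum_const, Finset.card_univ, nsmul_eq_mul]
      _ = ∑ ε : V → Bool, Spair A G (fun u v => xor (r u v) (xor (ε u) (ε v))) :=
          Finset.sum_congr rfl fun ε _ => (swap_reindex A G r ε).symm
      _ = ∑ ε : V → Bool, ∑ p : (V → Fin q) × (V → Fin q), ∏ e ∈ G.edgeFinset,
            Wf A (fun u v => xor (r u v) (xor (ε u) (ε v))) p.1 p.2 e := by
          simp only [Spair]
      _ = ∑ p : (V → Fin q) × (V → Fin q), ∑ ε : V → Bool, ∏ e ∈ G.edgeFinset,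
            Wf A (fun u v => xor (r u v) (xor (ε u) (ε v))) p.1 p.2 e :=
          Finset.sum_comm
  have hmul : (Fintype.card (V → Bool) : ℝ) * Spair A G t
      ≤ (Fintype.card (V → Bool) : ℝ) * Spair A G (fun _ _ => true) := by
    rw [expand t, expand (fun _ _ => true)]
    exact Finset.sum_le_sum fun p _ => eps_le A G hnn hTN t p.1 p.2
  exact le_of_mul_le_mul_left hmul hcard

/-- The pairing equivalence between pairs of colourings of `V` and colourings of `V × Bool`. -/
def pairEquiv (V : Type) (q : ℕ) : ((V → Fin q) × (V → Fin q)) ≃ (V × Bool → Fin q) where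
  toFun p := fun vb => cond vb.2 (p.2 vb.1) (p.1 vb.1)
  invFun φ := (fun v => φ (v, false), fun v => φ (v, true))
  left_inv p := rfl
  right_inv φ := by funext vb; rcases vb with ⟨v, b⟩; cases b <;> rfl

/-- The fibre of the projection of the edge set of a 2-lift over an edge of `G`. -/
lemma fiber_eq {V : Type} (G : SimpleGraph V) (s : V → V → Bool)
    (hs : ∀ u v, s u v = s v u) [Fintype V] [DecidableEq V]
    {e : Sym2 V} {u v : V} (heout : e = s(u, v)) (hadj : G.Adj u v) :
    (twoLift G s hs).edgeFinset.filter (fun E => Sym2.map Prod.fst E = e)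
      = {s((u, false), (v, s u v)), s((u, true), (v, !(s u v)))} := by
  ext E
  rw [Finset.mem_filter, Finset.mem_insert, Finset.mem_singleton]
  constructor
  · rintro ⟨hEmem, hEmap⟩
    rw [SimpleGraph.mem_edgeFinset] at hEmem
    induction E using Sym2.inductionOn with
    | hf a b =>
      rw [SimpleGraph.mem_edgeSet] at hEmem
      obtain ⟨hG, hxor⟩ : G.Adj a.1 b.1 ∧ xor a.2 b.2 = s a.1 b.1 := hEmem
      rw [Sym2.map_pair_eq, heout, Sym2.eq_iff] at hEmap
      rcases a with ⟨a1, a2⟩; rcases b with ⟨b1, b2⟩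
      simp only at hEmap hxor hG
      rcases hEmap with ⟨rfl, rfl⟩ | ⟨rfl, rfl⟩
      · cases a2
        · left
          have : b2 = s a1 b1 := by simpa using hxor
          rw [this]
        · right
          have : b2 = !(s a1 b1) := by
            cases b2 <;> cases hsv : s a1 b1 <;> simp_all
          rw [this]
      · have hsuv : xor b2 a2 = s b1 a1 := by
          rw [Bool.xor_comm, hxor, hs]
        have hswap : s((a1, a2), (b1, b2)) = s((b1, b2), (a1, a2)) :=
          Sym2.eq_swap
        rw [hswap]
        cases b2
        · left
          have : a2 = s b1 a1 := by simpa using hsuv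
          rw [this]
        · right
          have : a2 = !(s b1 a1) := by
            cases a2 <;> cases hsv : s b1 a1 <;> simp_all
          rw [this]
  · intro hE
    have adj1 : (twoLift G s hs).Adj (u, false) (v, s u v) := ⟨hadj, by simp⟩
    have adj2 : (twoLift G s hs).Adj (u, true) (v, !(s u v)) := ⟨hadj, by simp⟩
    rcases hE with rfl | rfl
    · exact ⟨SimpleGraph.mem_edgeFinset.mpr adj1, by rw [Sym2.map_pair_eq, heout]⟩
    · exact ⟨SimpleGraph.mem_edgeFinset.mpr adj2, by rw [Sym2.map_pair_eq, heout]⟩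

/-- Master lemma: the partition function of a 2-lift, rewritten in the pair world. -/
lemma master {q : ℕ} (A : Matrix (Fin q) (Fin q) ℝ) (hsymm : A.IsSymm)
    {V : Type} [Fintype V] (G : SimpleGraph V)
    (s : V → V → Bool) (hs : ∀ u v, s u v = s v u) :
    Z (twoLift G s hs) A = Spair A G s := by
  classical
  have hZ : Z (twoLift G s hs) A = ∑ p : (V → Fin q) × (V → Fin q),
      ∏ e ∈ (twoLift G s hs).edgeFinset,
        A ((pairEquiv V q p) (Quot.out e).1) ((pairEquiv V q p) (Quot.out e).2) := by
    unfold Z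
    have h := Fintype.sum_equiv (pairEquiv V q)
      (fun p : (V → Fin q) × (V → Fin q) => ∏ e ∈ (twoLift G s hs).edgeFinset,
        A ((pairEquiv V q p) (Quot.out e).1) ((pairEquiv V q p) (Quot.out e).2))
      (fun ψ => ∏ e ∈ (twoLift G s hs).edgeFinset,
        A (ψ (Quot.out e).1) (ψ (Quot.out e).2))
      (fun p => rfl)
    convert h.symm using 2
    ext x
    simp
  rw [hZ, Spair]
  refine Finset.sum_congr rfl fun p _ => ?_
  set φ := pairEquiv V q p with hφ
  have hmaps : ∀ E ∈ (twoLift G s hs).edgeFinset, Sym2.map Prod.fst E ∈ G.edgeFinset := by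
    intro E hE
    rw [SimpleGraph.mem_edgeFinset] at hE ⊢
    induction E using Sym2.inductionOn with
    | hf a b =>
      rw [SimpleGraph.mem_edgeSet] at hE
      rw [Sym2.map_pair_eq, SimpleGraph.mem_edgeSet]
      exact hE.1
  rw [← Finset.prod_fiberwise_of_maps_to hmaps
    (fun E => A (φ (Quot.out E).1) (φ (Quot.out E).2))]
  refine Finset.prod_congr rfl fun e he => ?_
  rcases hq : Quot.out e with ⟨u, v⟩
  have heout : e = s(u, v) := by
    rw [← Quot.out_eq e, hq]
  have hadj : G.Adj u v := by
    rw [SimpleGraph.mem_edgeFinset, heout, SimpleGraph.mem_edgeSet] at he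
    exact he
  have hne : u ≠ v := hadj.ne
  rw [fiber_eq G s hs heout hadj]
  have hne12 : s((u, false), (v, s u v)) ≠ s((u, true), (v, !(s u v))) := by
    intro hcon
    rcases Sym2.eq_iff.mp hcon with ⟨h1, -⟩ | ⟨h1, -⟩
    · exact absurd (congrArg Prod.snd h1) (by simp)
    · exact hne (congrArg Prod.fst h1)
  rw [Finset.prod_pair hne12]
  have hwsym : ∀ a b : V × Bool, A (φ a) (φ b) = A (φ b) (φ a) := fun a b =>
    (hsymm.apply (φ a) (φ b)).symm
  rw [out_pair _ hwsym rfl, out_pair _ hwsym rfl]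
  rw [Wf, hq]
  cases hsv : s u v <;>
    simp [pw, hsv, hφ, pairEquiv]

/-- `Spair` with the all-parallel sign pattern is the square of the partition function. -/
lemma spair_false {q : ℕ} (A : Matrix (Fin q) (Fin q) ℝ) {V : Type} [Fintype V]
    (G : SimpleGraph V) :
    Spair A G (fun _ _ => false) = Z G A * Z G A := by
  classical
  have h1 : ∀ x y : V → Fin q,
      (∏ e ∈ G.edgeFinset, Wf A (fun _ _ => false) x y e)
        = (∏ e ∈ G.edgeFinset, A (x (Quot.out e).1) (x (Quot.out e).2))
          * ∏ e ∈ G.edgeFinset, A (y (Quot.out e).1) (y (Quot.out e).2) := by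
    intro x y
    rw [← Finset.prod_mul_distrib]
    exact Finset.prod_congr rfl fun e _ => pw_false A _ _ _ _
  rw [Spair, Z]
  calc ∑ p : (V → Fin q) × (V → Fin q), ∏ e ∈ G.edgeFinset, Wf A (fun _ _ => false) p.1 p.2 e
      = ∑ p : (V → Fin q) × (V → Fin q),
          (∏ e ∈ G.edgeFinset, A (p.1 (Quot.out e).1) (p.1 (Quot.out e).2))
            * ∏ e ∈ G.edgeFinset, A (p.2 (Quot.out e).1) (p.2 (Quot.out e).2) :=
        Finset.sum_congr rfl fun p _ => h1 p.1 p.2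
    _ = (∑ x : V → Fin q, ∏ e ∈ G.edgeFinset, A (x (Quot.out e).1) (x (Quot.out e).2))
          * ∑ y : V → Fin q, ∏ e ∈ G.edgeFinset, A (y (Quot.out e).1) (y (Quot.out e).2) := by
        rw [Fintype.sum_prod_type, Fintype.sum_mul_sum]

end TN2aux

theorem TN2_two_lift {q : ℕ} (A : Matrix (Fin q) (Fin q) ℝ)
    (hnn : ∀ i j, 0 ≤ A i j) (hsymm : A.IsSymm)
    (hTN : ∀ i j r s : Fin q, i < j → r < s → A i r * A j s - A i s * A j r ≤ 0)
    {V : Type} [Fintype V] (G : SimpleGraph V)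
    (s : V → V → Bool) (hs : ∀ u v, s u v = s v u) :
    Z (twoLift G s hs) A ≤ Z (doubleCover G) A ∧ (Z G A) ^ 2 ≤ Z (doubleCover G) A := by
  have hDC : Z (doubleCover G) A = TN2aux.Spair A G (fun _ _ => true) :=
    TN2aux.master A hsymm G (fun _ _ => true) (fun _ _ => rfl)
  constructor
  · rw [TN2aux.master A hsymm G s hs, hDC]
    exact TN2aux.pair_le A G hnn hTN s
  · rw [hDC, sq, ← TN2aux.spair_false A G]
    exact TN2aux.pair_le A G hnn hTN _
end

section
/- Let A be a nonnegative symmetric q × q real matrix that is TN₂. Then for any bipartite graph G and any 2-lift H of G, we have Z(G,A)² ≥ Z(H,A). -/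
open Finset
open scoped Classical

namespace TN2Aux


/-- conditional swap -/
def ρ {α : Type} (c : Bool) (p : α × α) : α × α := if c then (p.2, p.1) else p

noncomputable def χ (c d : Bool) : ℝ := if c = d then 1 else -1

noncomputable def aF {q : ℕ} (A : Matrix (Fin q) (Fin q) ℝ) (p r : Fin q × Fin q) : ℝ :=
  (A p.1 r.1 * A p.2 r.2 + A p.1 r.2 * A p.2 r.1) / 2

noncomputable def bF {q : ℕ} (A : Matrix (Fin q) (Fin q) ℝ) (p r : Fin q × Fin q) : ℝ :=
  (A p.1 r.1 * A p.2 r.2 - A p.1 r.2 * A p.2 r.1) / 2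

lemma rho_invol {α : Type} (c : Bool) (p : α × α) : ρ c (ρ c p) = p := by
  cases c <;> simp [ρ]

lemma aF_rho {q : ℕ} (A : Matrix (Fin q) (Fin q) ℝ) (c d : Bool) (p r : Fin q × Fin q) :
    aF A (ρ c p) (ρ d r) = aF A p r := by
  cases c <;> cases d <;> simp [aF, ρ] <;> ring

lemma bF_rho {q : ℕ} (A : Matrix (Fin q) (Fin q) ℝ) (c d : Bool) (p r : Fin q × Fin q) :
    bF A (ρ c p) (ρ d r) = χ c d * bF A p r := by
  cases c <;> cases d <;> simp [bF, ρ, χ] <;> ring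

lemma aF_nonneg {q : ℕ} (A : Matrix (Fin q) (Fin q) ℝ) (hnn : ∀ i j, 0 ≤ A i j)
    (p r : Fin q × Fin q) : 0 ≤ aF A p r := by
  unfold aF
  have := hnn p.1 r.1; have := hnn p.2 r.2; have := hnn p.1 r.2; have := hnn p.2 r.1
  positivity

lemma bF_nonpos {q : ℕ} (A : Matrix (Fin q) (Fin q) ℝ)
    (hTN : ∀ i j r s : Fin q, i < j → r < s → A i r * A j s - A i s * A j r ≤ 0)
    (p r : Fin q × Fin q) (hp : p.1 ≤ p.2) (hr : r.1 ≤ r.2) : bF A p r ≤ 0 := by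
  unfold bF
  rcases eq_or_lt_of_le hp with h1 | h1
  · rw [← h1]
    nlinarith [mul_comm (A p.1 r.1) (A p.1 r.2)]
  · rcases eq_or_lt_of_le hr with h2 | h2
    · rw [← h2]
      nlinarith [mul_comm (A p.1 r.1) (A p.2 r.1)]
    · have := hTN p.1 p.2 r.1 r.2 h1 h2
      linarith

lemma prod_nonpos_even {γ : Type} (t : Finset γ) (f : γ → ℝ)
    (h : ∀ e ∈ t, f e ≤ 0) (he : Even t.card) : 0 ≤ ∏ e ∈ t, f e := by
  have h1 : ∏ e ∈ t, f e = ((-1 : ℝ) ^ t.card) * ∏ e ∈ t, (-(f e)) := by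
    rw [← Finset.prod_const, ← Finset.prod_mul_distrib]
    exact Finset.prod_congr rfl (fun e _ => by ring)
  rw [h1, he.neg_one_pow, one_mul]
  exact Finset.prod_nonneg (fun e het => neg_nonneg.mpr (h e het))

lemma chi_sq (c d : Bool) : χ c d * χ c d = 1 := by
  unfold χ; split <;> norm_num

lemma sum_inst {α M : Type} [AddCommMonoid M] {i1 i2 : Fintype α} (f : α → M) :
    @Finset.sum α M _ (@Finset.univ α i1) f = @Finset.sum α M _ (@Finset.univ α i2) f := by
  rw [Subsingleton.elim i1 i2]

/-- The core positivity: the coefficient `T_t` is nonnegative. -/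
lemma core {q : ℕ} (A : Matrix (Fin q) (Fin q) ℝ)
    (hnn : ∀ i j, 0 ≤ A i j)
    (hTN : ∀ i j r s : Fin q, i < j → r < s → A i r * A j s - A i s * A j r ≤ 0)
    {V ε : Type} [Fintype V] [DecidableEq ε] (U W : ε → V)
    (δc : V → Bool) (EE : Finset ε) (hcol : ∀ e ∈ EE, δc (U e) ≠ δc (W e))
    (t : Finset ε) (ht : t ⊆ EE) :
    0 ≤ ∑ x : V → Fin q × Fin q,
      (∏ e ∈ t, bF A (x (U e)) (x (W e))) * ∏ e ∈ EE \ t, aF A (x (U e)) (x (W e)) := by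
  by_cases hP : ∀ δ : V → Bool, ∏ e ∈ t, χ (δ (U e)) (δ (W e)) = 1
  · -- each summand is nonnegative
    have hEven : Even t.card := by
      have h1 := hP δc
      have h2 : ∏ e ∈ t, χ (δc (U e)) (δc (W e)) = (-1 : ℝ) ^ t.card := by
        rw [← Finset.prod_const]
        refine Finset.prod_congr rfl (fun e het => ?_)
        unfold χ
        rw [if_neg (hcol e (ht het))]
      rw [h2] at h1
      exact (neg_one_pow_eq_one_iff_even (by norm_num : (-1:ℝ) ≠ 1)).mp h1
    refine Finset.sum_nonneg (fun x _ => ?_)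
    set δx : V → Bool := fun v => !(decide ((x v).1 ≤ (x v).2)) with hδx
    set y : V → Fin q × Fin q := fun v =>
      if (x v).1 ≤ (x v).2 then x v else ((x v).2, (x v).1) with hy
    have hxv : ∀ v, x v = ρ (δx v) (y v) := by
      intro v
      by_cases h : (x v).1 ≤ (x v).2 <;> simp [hδx, hy, ρ, h]
    have hysort : ∀ v, (y v).1 ≤ (y v).2 := by
      intro v
      by_cases h : (x v).1 ≤ (x v).2
      · simp [hy, h]
      · simp [hy, h]
        exact le_of_not_ge h
    have hb : ∏ e ∈ t, bF A (x (U e)) (x (W e))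
        = ∏ e ∈ t, bF A (y (U e)) (y (W e)) := by
      have : ∀ e ∈ t, bF A (x (U e)) (x (W e))
          = χ (δx (U e)) (δx (W e)) * bF A (y (U e)) (y (W e)) := by
        intro e _
        rw [hxv (U e), hxv (W e), bF_rho]
      rw [Finset.prod_congr rfl this, Finset.prod_mul_distrib, hP δx, one_mul]
    have ha : ∏ e ∈ EE \ t, aF A (x (U e)) (x (W e))
        = ∏ e ∈ EE \ t, aF A (y (U e)) (y (W e)) := by
      refine Finset.prod_congr rfl (fun e _ => ?_)
      rw [hxv (U e), hxv (W e), aF_rho]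
    rw [hb, ha]
    refine mul_nonneg ?_ (Finset.prod_nonneg (fun e _ => aF_nonneg A hnn _ _))
    exact prod_nonpos_even t _ (fun e _ => bF_nonpos A hTN _ _ (hysort _) (hysort _)) hEven
  · -- the whole sum vanishes
    push_neg at hP
    obtain ⟨δ₀, hδ₀⟩ := hP
    have hκsq : (∏ e ∈ t, χ (δ₀ (U e)) (δ₀ (W e))) * (∏ e ∈ t, χ (δ₀ (U e)) (δ₀ (W e))) = 1 := by
      rw [← Finset.prod_mul_distrib]
      exact Finset.prod_eq_one (fun e _ => chi_sq _ _)
    have hκ : ∏ e ∈ t, χ (δ₀ (U e)) (δ₀ (W e)) = -1 := by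
      rcases mul_self_eq_one_iff.mp hκsq with h | h
      · exact absurd h hδ₀
      · exact h
    set c : (V → Fin q × Fin q) → ℝ := fun x =>
      (∏ e ∈ t, bF A (x (U e)) (x (W e))) * ∏ e ∈ EE \ t, aF A (x (U e)) (x (W e)) with hc
    set g : (V → Fin q × Fin q) → (V → Fin q × Fin q) := fun x v => ρ (δ₀ v) (x v) with hg
    have hginv : Function.Involutive g := by
      intro x; funext v; simp [hg, rho_invol]
    have hcg : ∀ x, c (g x) = - c x := by
      intro x
      have hbb : ∏ e ∈ t, bF A (g x (U e)) (g x (W e))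
          = -∏ e ∈ t, bF A (x (U e)) (x (W e)) := by
        have : ∀ e ∈ t, bF A (g x (U e)) (g x (W e))
            = χ (δ₀ (U e)) (δ₀ (W e)) * bF A (x (U e)) (x (W e)) := by
          intro e _; rw [hg]; exact bF_rho A _ _ _ _
        rw [Finset.prod_congr rfl this, Finset.prod_mul_distrib, hκ]
        ring
      have haa : ∏ e ∈ EE \ t, aF A (g x (U e)) (g x (W e))
          = ∏ e ∈ EE \ t, aF A (x (U e)) (x (W e)) := by
        refine Finset.prod_congr rfl (fun e _ => ?_)
        rw [hg]; exact aF_rho A _ _ _ _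
      simp only [hc, hbb, haa]
      ring
    have hsum : ∑ x : V → Fin q × Fin q, c x = - ∑ x : V → Fin q × Fin q, c x := by
      conv_lhs => rw [← Fintype.sum_bijective g hginv.bijective (fun x => c (g x)) c (fun x => rfl)]
      rw [← Finset.sum_neg_distrib]
      exact Finset.sum_congr rfl (fun x _ => hcg x)
    have : ∑ x : V → Fin q × Fin q, c x = 0 := by linarith
    rw [this]



lemma out_pair_eq {α : Type} (e : Sym2 α) :
    s((Quot.out e).1, (Quot.out e).2) = e := by
  show Quot.mk _ ((Quot.out e).1, (Quot.out e).2) = e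
  rw [Prod.mk.eta]
  exact Quot.out_eq e

lemma out_eval {α : Type} (w : α → α → ℝ) (hw : ∀ a b, w a b = w b a) (p r : α) :
    w (Quot.out s(p,r)).1 (Quot.out s(p,r)).2 = w p r := by
  have h : s((Quot.out (s(p,r))).1, (Quot.out s(p,r)).2) = s(p,r) := out_pair_eq _
  rcases Sym2.eq_iff.mp h with ⟨h1, h2⟩ | ⟨h1, h2⟩
  · rw [h1, h2]
  · rw [h1, h2, hw]

lemma out_cases {α : Type} (p r : α) :
    Quot.out s(p,r) = (p, r) ∨ Quot.out s(p,r) = (r, p) := by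
  have h : s((Quot.out (s(p,r))).1, (Quot.out s(p,r)).2) = s(p,r) := out_pair_eq _
  rcases Sym2.eq_iff.mp h with ⟨h1, h2⟩ | ⟨h1, h2⟩
  · left; exact Prod.ext h1 h2
  · right; exact Prod.ext h1 h2

/-- the two lifted edges of `e` -/
noncomputable def liftEdge {V : Type} (s : V → V → Bool) (e : Sym2 V) (b : Bool) :
    Sym2 (V × Bool) :=
  s(((Quot.out e).1, b), ((Quot.out e).2, xor b (s (Quot.out e).1 (Quot.out e).2)))

lemma liftEdge_proj {V : Type} (s : V → V → Bool) (e : Sym2 V) (b : Bool) :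
    Sym2.map Prod.fst (liftEdge s e b) = e := by
  rw [liftEdge, Sym2.map_pair_eq]
  exact out_pair_eq e

lemma edgeFinset_twoLift {V : Type} [Fintype V] (G : SimpleGraph V) (s : V → V → Bool)
    (hs : ∀ u v, s u v = s v u) :
    (twoLift G s hs).edgeFinset
      = G.edgeFinset.biUnion (fun e => {liftEdge s e false, liftEdge s e true}) := by
  apply Finset.Subset.antisymm
  · intro E' hE'
    induction E' using Sym2.ind with
    | _ α β =>
      obtain ⟨u, c⟩ := α; obtain ⟨v, d⟩ := β
      rw [SimpleGraph.mem_edgeFinset, SimpleGraph.mem_edgeSet] at hE'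
      obtain ⟨hadj, hxor⟩ := hE'
      rw [Finset.mem_biUnion]
      refine ⟨s(u,v), SimpleGraph.mem_edgeFinset.mpr ((G.mem_edgeSet).mpr hadj), ?_⟩
      simp only [Finset.mem_insert, Finset.mem_singleton]
      rcases out_cases u v with hout | hout
      · -- out = (u, v) : take b := c
        have : liftEdge s (s(u,v)) c = s((u,c),(v,d)) := by
          rw [liftEdge, hout]
          congr 1
          rw [← hxor]
          cases c <;> cases d <;> rfl
        cases c
        · left; rw [← this]
        · right; rw [← this]
      · -- out = (v, u) : take b := d
        have : liftEdge s (s(u,v)) d = s((u,c),(v,d)) := by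
          rw [liftEdge, hout]
          have h2 : xor d (s v u) = c := by
            rw [← hs u v, ← hxor]
            cases c <;> cases d <;> rfl
          rw [h2]
          rw [Sym2.eq_iff]; right; exact ⟨rfl, rfl⟩
        cases d
        · left; rw [← this]
        · right; rw [← this]
  · intro E' hE'
    rw [Finset.mem_biUnion] at hE'
    obtain ⟨e, he, hmem⟩ := hE'
    have hadj : G.Adj (Quot.out e).1 (Quot.out e).2 := by
      rw [← SimpleGraph.mem_edgeSet, out_pair_eq]
      exact SimpleGraph.mem_edgeFinset.mp he
    simp only [Finset.mem_insert, Finset.mem_singleton] at hmem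
    have key : ∀ b : Bool, liftEdge s e b ∈ (twoLift G s hs).edgeFinset := by
      intro b
      rw [liftEdge, SimpleGraph.mem_edgeFinset, SimpleGraph.mem_edgeSet]
      refine ⟨hadj, ?_⟩
      cases b <;> cases s (Quot.out e).1 (Quot.out e).2 <;> rfl
    rcases hmem with h | h <;> rw [h] <;> exact key _

lemma liftEdge_ne {V : Type} (G : SimpleGraph V) (s : V → V → Bool) (e : Sym2 V)
    (hadj : G.Adj (Quot.out e).1 (Quot.out e).2) :
    liftEdge s e false ≠ liftEdge s e true := by
  intro h
  rw [liftEdge, liftEdge, Sym2.eq_iff] at h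
  rcases h with ⟨h1, _⟩ | ⟨h1, _⟩
  · exact Bool.false_ne_true (congrArg Prod.snd h1)
  · exact hadj.ne (congrArg Prod.fst h1)

/-- Product over the edges of the 2-lift. -/
lemma lift_prod {V : Type} [Fintype V] (G : SimpleGraph V) (s : V → V → Bool)
    (hs : ∀ u v, s u v = s v u)
    (w : V × Bool → V × Bool → ℝ) (hw : ∀ a b, w a b = w b a) :
    ∏ E' ∈ (twoLift G s hs).edgeFinset, w (Quot.out E').1 (Quot.out E').2
    = ∏ e ∈ G.edgeFinset,
        (w ((Quot.out e).1, false) ((Quot.out e).2, s (Quot.out e).1 (Quot.out e).2) *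
         w ((Quot.out e).1, true) ((Quot.out e).2, !(s (Quot.out e).1 (Quot.out e).2))) := by
  rw [edgeFinset_twoLift G s hs]
  rw [Finset.prod_biUnion ?hd]
  case hd =>
    intro e1 h1 e2 h2 hne
    simp only [Function.onFun]
    rw [Finset.disjoint_left]
    intro E hE1 hE2
    simp only [Finset.mem_insert, Finset.mem_singleton, Finset.mem_coe] at hE1 hE2
    apply hne
    have p1 : Sym2.map Prod.fst E = e1 := by
      rcases hE1 with h | h <;> rw [h, liftEdge_proj]
    have p2 : Sym2.map Prod.fst E = e2 := by
      rcases hE2 with h | h <;> rw [h, liftEdge_proj]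
    rw [← p1, ← p2]
  refine Finset.prod_congr rfl (fun e he => ?_)
  have hadj : G.Adj (Quot.out e).1 (Quot.out e).2 := by
    rw [← SimpleGraph.mem_edgeSet, out_pair_eq]
    exact SimpleGraph.mem_edgeFinset.mp he
  rw [Finset.prod_pair (liftEdge_ne G s e hadj)]
  congr 1
  · rw [liftEdge, out_eval w hw, Bool.false_xor]
  · rw [liftEdge, out_eval w hw, Bool.true_xor]


end TN2Aux

theorem TN2_two_lift_bipartite {q : ℕ} (A : Matrix (Fin q) (Fin q) ℝ)
    (hnn : ∀ i j, 0 ≤ A i j) (hsymm : A.IsSymm)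
    (hTN : ∀ i j r s : Fin q, i < j → r < s → A i r * A j s - A i s * A j r ≤ 0)
    {V : Type} [Fintype V] (G : SimpleGraph V) (hbip : G.Colorable 2)
    (s : V → V → Bool) (hs : ∀ u v, s u v = s v u) :
    Z (twoLift G s hs) A ≤ (Z G A) ^ 2 := by
  have hA : ∀ i j, A i j = A j i := fun i j => (hsymm.apply i j).symm
  set X := (Fin q × Fin q)
  set E := G.edgeFinset with hEdef
  set U : Sym2 V → V := fun e => (Quot.out e).1 with hUdef
  set W : Sym2 V → V := fun e => (Quot.out e).2 with hWdef
  set sg : Sym2 V → ℝ := fun e => if s (U e) (W e) then -1 else 1 with hsgdef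
  have hadjE : ∀ e ∈ E, G.Adj (U e) (W e) := by
    intro e he
    rw [← SimpleGraph.mem_edgeSet, TN2Aux.out_pair_eq]
    exact SimpleGraph.mem_edgeFinset.mp he
  -- Step 1 : rewrite Z of the two-lift
  have hZlift : Z (twoLift G s hs) A = ∑ x : V → X, ∏ e ∈ E,
      (TN2Aux.aF A (x (U e)) (x (W e)) + sg e * TN2Aux.bF A (x (U e)) (x (W e))) := by
    rw [Z]
    set Ψ : (V → X) → (V × Bool → Fin q) := fun x p => cond p.2 (x p.1).2 (x p.1).1 with hΨ
    have hbij : Function.Bijective Ψ := by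
      rw [Function.bijective_iff_has_inverse]
      refine ⟨fun φ v => (φ (v, false), φ (v, true)), fun x => ?_, fun φ => ?_⟩
      · funext v; simp [hΨ]
      · funext p; obtain ⟨v, b⟩ := p; cases b <;> rfl
    have step : (∑ x : V → X, ∏ e ∈ E,
        (TN2Aux.aF A (x (U e)) (x (W e)) + sg e * TN2Aux.bF A (x (U e)) (x (W e))))
        = ∑ φ : V × Bool → Fin q, ∏ e ∈ (twoLift G s hs).edgeFinset,
            A (φ (Quot.out e).1) (φ (Quot.out e).2) := by
      apply Fintype.sum_bijective Ψ hbij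
      intro x
      rw [TN2Aux.lift_prod G s hs (fun a b => A (Ψ x a) (Ψ x b)) (fun a b => hA _ _)]
      refine (Finset.prod_congr rfl (fun e he => ?_)).symm
      by_cases hsv : s (U e) (W e)
      · simp only [hsgdef, hΨ, hsv, hUdef, hWdef, show s (Quot.out e).1 (Quot.out e).2 = true from hsv, if_true, Bool.not_true, Bool.not_false, cond_true, cond_false]
        simp only [TN2Aux.aF, TN2Aux.bF]
        ring
      · simp only [hsgdef, hΨ, hsv, hUdef, hWdef, show s (Quot.out e).1 (Quot.out e).2 = false from Bool.eq_false_iff.mpr hsv, if_false, Bool.not_true, Bool.not_false, cond_true,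
          cond_false, Bool.false_eq_true]
        simp only [TN2Aux.aF, TN2Aux.bF]
        ring
    exact Eq.trans (TN2Aux.sum_inst _) step.symm
  -- Step 2 : rewrite Z(G)^2
  have hZsq : (Z G A) ^ 2 = ∑ x : V → X, ∏ e ∈ E,
      (TN2Aux.aF A (x (U e)) (x (W e)) + TN2Aux.bF A (x (U e)) (x (W e))) := by
    have e1 : (Z G A) ^ 2 = ∑ p : (V → Fin q) × (V → Fin q),
        (∏ e ∈ E, A (p.1 (U e)) (p.1 (W e))) * (∏ e ∈ E, A (p.2 (U e)) (p.2 (W e))) := by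
      rw [Z, sq, Finset.sum_mul_sum, Fintype.sum_prod_type]
    rw [e1]
    set Θ : (V → X) → (V → Fin q) × (V → Fin q) :=
      fun x => (fun v => (x v).1, fun v => (x v).2) with hΘ
    have hbij : Function.Bijective Θ := by
      rw [Function.bijective_iff_has_inverse]
      refine ⟨fun p v => (p.1 v, p.2 v), fun x => ?_, fun p => ?_⟩
      · funext v; simp [hΘ]
      · obtain ⟨p1, p2⟩ := p; simp [hΘ]
    have step : (∑ x : V → X, ∏ e ∈ E,
        (TN2Aux.aF A (x (U e)) (x (W e)) + TN2Aux.bF A (x (U e)) (x (W e))))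
        = ∑ p : (V → Fin q) × (V → Fin q),
          (∏ e ∈ E, A (p.1 (U e)) (p.1 (W e))) * (∏ e ∈ E, A (p.2 (U e)) (p.2 (W e))) := by
      apply Fintype.sum_bijective Θ hbij
      intro x
      rw [← Finset.prod_mul_distrib]
      refine Finset.prod_congr rfl (fun e he => ?_)
      simp only [TN2Aux.aF, TN2Aux.bF, hΘ]
      ring
    convert step.symm using 2
  -- Step 3 : expand and compare
  rw [← sub_nonneg, hZlift, hZsq, ← Finset.sum_sub_distrib]
  have expand : ∀ x : V → X,
      (∏ e ∈ E, (TN2Aux.aF A (x (U e)) (x (W e)) + TN2Aux.bF A (x (U e)) (x (W e))))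
      - (∏ e ∈ E, (TN2Aux.aF A (x (U e)) (x (W e)) + sg e * TN2Aux.bF A (x (U e)) (x (W e))))
      = ∑ t ∈ E.powerset, (1 - ∏ e ∈ t, sg e) *
          ((∏ e ∈ t, TN2Aux.bF A (x (U e)) (x (W e))) *
           ∏ e ∈ E \ t, TN2Aux.aF A (x (U e)) (x (W e))) := by
    intro x
    have p1 : (∏ e ∈ E, (TN2Aux.aF A (x (U e)) (x (W e)) + TN2Aux.bF A (x (U e)) (x (W e))))
        = ∑ t ∈ E.powerset, (∏ e ∈ t, TN2Aux.bF A (x (U e)) (x (W e))) *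
            ∏ e ∈ E \ t, TN2Aux.aF A (x (U e)) (x (W e)) := by
      rw [show (∏ e ∈ E, (TN2Aux.aF A (x (U e)) (x (W e)) + TN2Aux.bF A (x (U e)) (x (W e))))
          = ∏ e ∈ E, (TN2Aux.bF A (x (U e)) (x (W e)) + TN2Aux.aF A (x (U e)) (x (W e)))
          from Finset.prod_congr rfl (fun e _ => add_comm _ _)]
      exact Finset.prod_add _ _ _
    have p2 : (∏ e ∈ E, (TN2Aux.aF A (x (U e)) (x (W e)) + sg e * TN2Aux.bF A (x (U e)) (x (W e))))
        = ∑ t ∈ E.powerset, (∏ e ∈ t, sg e) * ((∏ e ∈ t, TN2Aux.bF A (x (U e)) (x (W e))) *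
            ∏ e ∈ E \ t, TN2Aux.aF A (x (U e)) (x (W e))) := by
      rw [show (∏ e ∈ E, (TN2Aux.aF A (x (U e)) (x (W e)) + sg e * TN2Aux.bF A (x (U e)) (x (W e))))
          = ∏ e ∈ E, (sg e * TN2Aux.bF A (x (U e)) (x (W e)) + TN2Aux.aF A (x (U e)) (x (W e)))
          from Finset.prod_congr rfl (fun e _ => add_comm _ _)]
      rw [Finset.prod_add]
      refine Finset.sum_congr rfl (fun t ht => ?_)
      rw [Finset.prod_mul_distrib, mul_assoc]
    rw [p1, p2, ← Finset.sum_sub_distrib]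
    refine Finset.sum_congr rfl (fun t ht => ?_)
    ring
  rw [Finset.sum_congr rfl (fun x _ => expand x), Finset.sum_comm]
  -- coloring
  obtain ⟨C⟩ := hbip
  set δc : V → Bool := fun v => decide (C v = 0) with hδc
  have hcol : ∀ e ∈ E, δc (U e) ≠ δc (W e) := by
    intro e he hEq
    have hCne : C (U e) ≠ C (W e) := C.valid (hadjE e he)
    have key : ∀ a b : Fin 2, ((a = 0) ↔ (b = 0)) → a = b := by decide
    exact hCne (key _ _ (decide_eq_decide.mp hEq))
  refine Finset.sum_nonneg (fun t ht => ?_)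
  rw [← Finset.mul_sum]
  refine mul_nonneg ?_ ?_
  · -- 1 - ∏ sg ≥ 0
    have hsq : (∏ e ∈ t, sg e) * (∏ e ∈ t, sg e) = 1 := by
      rw [← Finset.prod_mul_distrib]
      refine Finset.prod_eq_one (fun e _ => ?_)
      simp only [hsgdef]
      split <;> norm_num
    rcases mul_self_eq_one_iff.mp hsq with h | h <;> rw [h] <;> norm_num
  · exact TN2Aux.core A hnn hTN U W δc E hcol t (Finset.mem_powerset.mp ht)
end
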